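/- Let K and k_1,…,k_t be positive integers with k_1+⋯+k_t = 2K. On the candidate set {a,b,c} with tie-breaking order c ≻ a ≻ b, let P be the weighted profile consisting of weight 7K of the vote b≻c≻a, weight K of b≻a≻c, weight 4K of a≻c≻b, weight 2K of a≻b≻c, and weight 1 of c≻a≻b, and let there be t manipulators where manipulator i casts one vote of weight 2k_i. Consider the runoff combination Copeland+plurality. Then there exists a choice of manipulator votes making c the Copeland+plurality winner of the combined weighted profile if and only if there exists S ⊆ {1,…,t} with Σ_{i∈S} k_i = K. -/

import Mathlib

/-
Weighted voting on the three-candidate set {a, b, c}. A weighted profile is a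
finite list of pairs (vote, weight), where a vote is a duplicate-free list of
all three candidates (earlier = more preferred) and the weight is a positive
natural number. `T` always denotes the tie-breaking (strict linear) order.
-/

inductive Cand : Type
  | a | b | c
  deriving DecidableEq

instance instFintypeCand : Fintype Cand :=
  ⟨{Cand.a, Cand.b, Cand.c}, fun x => by cases x <;> decide⟩

/-- A weighted profile: a list of (vote, weight) pairs. -/
abbrev WProfile := List (List Cand × ℕ)

/-- The total weight `n` of a weighted profile. -/
def totalW (P : WProfile) : ℕ := (P.map Prod.snd).sum

/-- `N P x y`: the total weight of votes in `P` ranking `x` above `y`. -/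
def Nw (P : WProfile) (x y : Cand) : ℕ :=
  ((P.filter fun p => p.1.idxOf x < p.1.idxOf y).map Prod.snd).sum

/-- The `k`-approval score of `e`: the total weight of votes ranking `e`
among the top `k` positions. -/
def kApproval (P : WProfile) (k : ℕ) (e : Cand) : ℕ :=
  ((P.filter fun p => p.1.idxOf e < k).map Prod.snd).sum

/-- The Bucklin score of `e`: the least `k` such that the `k`-approval score
of `e` is strictly greater than half the total weight. -/
noncomputable def bucklinScore (P : WProfile) (e : Cand) : ℕ :=
  sInf {k | totalW P < 2 * kApproval P k e}

/-- `v` is a vote: a strict linear order of all three candidates. -/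
def ValidVote (v : List Cand) : Prop := v.Nodup ∧ v.toFinset = Finset.univ

/-- A valid weighted profile: every vote is a linear order and every weight is
positive. -/
def ValidWProfile (P : WProfile) : Prop := ∀ p ∈ P, ValidVote p.1 ∧ 0 < p.2

/-- The `T`-greatest candidate among the maximisers of `f`. -/
def argmaxT (T : LinearOrder Cand) (f : Cand → ℕ) : Cand :=
  @Finset.max' Cand T (Finset.univ.filter fun e => ∀ z, f z ≤ f e) (by
    obtain ⟨w, hw, hm⟩ := Finset.exists_max_image Finset.univ f ⟨Cand.a, Finset.mem_univ _⟩
    exact ⟨w, Finset.mem_filter.2 ⟨Finset.mem_univ _, fun z => hm z (Finset.mem_univ _)⟩⟩)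

/-- The `T`-greatest candidate among the minimisers of `f`. -/
def argminT (T : LinearOrder Cand) (f : Cand → ℕ) : Cand :=
  @Finset.max' Cand T (Finset.univ.filter fun e => ∀ z, f e ≤ f z) (by
    obtain ⟨w, hw, hm⟩ := Finset.exists_min_image Finset.univ f ⟨Cand.a, Finset.mem_univ _⟩
    exact ⟨w, Finset.mem_filter.2 ⟨Finset.mem_univ _, fun z => hm z (Finset.mem_univ _)⟩⟩)

/-- The plurality score of `e`: the total weight of votes ranking `e` first. -/
def pluralityScore (P : WProfile) (e : Cand) : ℕ :=
  ((P.filter fun p => p.1.head? = some e).map Prod.snd).sum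

/-- The plurality winner. -/
def pluralityWinner (T : LinearOrder Cand) (P : WProfile) : Cand :=
  argmaxT T (pluralityScore P)

/-- The Copeland score of `x`: the number of candidates `z ≠ x` with
`N(x,z) > N(z,x)`. -/
def copelandScore (P : WProfile) (x : Cand) : ℕ :=
  (Finset.univ.filter fun z => z ≠ x ∧ Nw P z x < Nw P x z).card

/-- The Copeland winner. -/
def copelandWinner (T : LinearOrder Cand) (P : WProfile) : Cand :=
  argmaxT T (copelandScore P)

/-- The maximin score of `x`: the minimum of `N(x,z)` over `z ≠ x`. -/
def maximinScore (P : WProfile) (x : Cand) : ℕ :=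
  (((Finset.univ : Finset Cand).erase x).image fun z => Nw P x z).min' (by
    apply Finset.Nonempty.image
    cases x <;> decide)

/-- The maximin winner. -/
def maximinWinner (T : LinearOrder Cand) (P : WProfile) : Cand :=
  argmaxT T (maximinScore P)

/-- The Bucklin winner: the `T`-greatest candidate of minimal Bucklin score. -/
noncomputable def bucklinWinner (T : LinearOrder Cand) (P : WProfile) : Cand :=
  argminT T (bucklinScore P)

/-- Winner of the pairwise contest between `x` and `z` (the `T`-greater
candidate winning on a tie). -/
def pairWin (T : LinearOrder Cand) (P : WProfile) (x z : Cand) : Cand :=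
  if Nw P z x < Nw P x z then x
  else if Nw P x z < Nw P z x then z
  else if T.lt x z then z else x

/-- The candidate other than the two (distinct) given ones. -/
def third (x y : Cand) : Cand :=
  if Cand.a ≠ x ∧ Cand.a ≠ y then Cand.a
  else if Cand.b ≠ x ∧ Cand.b ≠ y then Cand.b
  else Cand.c

/-- The cup winner for the agenda in which `p` and `q` meet first and the
winner then meets the remaining candidate. -/
def cupWinner (T : LinearOrder Cand) (p q : Cand) (P : WProfile) : Cand :=
  pairWin T P (pairWin T P p q) (third p q)

/-- Run-off combination `X + Y`: the common winner if `X` and `Y` agree;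
otherwise the pairwise-majority winner between the two winners, with the
`T`-greater candidate winning a tied run-off. -/
def runoffWinner (T : LinearOrder Cand) (X Y : WProfile → Cand) (P : WProfile) : Cand :=
  let x := X P
  let y := Y P
  if x = y then x
  else if Nw P y x < Nw P x y then x
  else if Nw P x y < Nw P y x then y
  else if T.lt x y then y else x

/-- Tie-breaking priority realising the order c ≻ a ≻ b. -/
def prio : Cand → ℕ
  | .a => 1
  | .b => 0
  | .c => 2

/-- The tie-breaking order c ≻ a ≻ b. -/
def Tcab : LinearOrder Cand := LinearOrder.lift' prio (by decide)

/-- The non-manipulators' profile: weight 7K of b≻c≻a, K of b≻a≻c,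
4K of a≻c≻b, 2K of a≻b≻c and 1 of c≻a≻b. -/
def P15 (K : ℕ) : WProfile :=
  [([Cand.b, Cand.c, Cand.a], 7 * K), ([Cand.b, Cand.a, Cand.c], K),
   ([Cand.a, Cand.c, Cand.b], 4 * K), ([Cand.a, Cand.b, Cand.c], 2 * K),
   ([Cand.c, Cand.a, Cand.b], 1)]

section Aux

open Cand

lemma valid_cases {v : List Cand} (hv : ValidVote v) :
    v = [a,b,c] ∨ v = [a,c,b] ∨ v = [b,a,c] ∨ v = [b,c,a] ∨ v = [c,a,b] ∨ v = [c,b,a] := by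
  obtain ⟨hnd, hu⟩ := hv
  have hlen : v.length = 3 := by
    have h1 : v.toFinset.card = 3 := by rw [hu]; decide
    rwa [List.toFinset_card_of_nodup hnd] at h1
  rcases v with _ | ⟨x, _ | ⟨y, _ | ⟨z, _ | ⟨w, l⟩⟩⟩⟩ <;> simp [List.length] at hlen
  cases x <;> cases y <;> cases z <;> revert hnd <;> decide

lemma sum_filter_map {α : Type*} (l : List (α × ℕ)) (p : α × ℕ → Bool) :
    ((l.filter p).map Prod.snd).sum = (l.map fun x => if p x then x.2 else 0).sum := by
  induction l with
  | nil => rfl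
  | cons h t ih => by_cases hp : p h <;> simp [hp, ih]

lemma nw_ofFn {t : ℕ} (g : Fin t → List Cand × ℕ) (x y : Cand) :
    Nw (List.ofFn g) x y
      = ∑ i, if (g i).1.idxOf x < (g i).1.idxOf y then (g i).2 else 0 := by
  rw [Nw, sum_filter_map, List.map_ofFn, List.sum_ofFn]
  simp

lemma plur_ofFn {t : ℕ} (g : Fin t → List Cand × ℕ) (e : Cand) :
    pluralityScore (List.ofFn g) e
      = ∑ i, if (g i).1.head? = some e then (g i).2 else 0 := by
  rw [pluralityScore, sum_filter_map, List.map_ofFn, List.sum_ofFn]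
  simp

lemma Nw_append (P Q : WProfile) (x y : Cand) :
    Nw (P ++ Q) x y = Nw P x y + Nw Q x y := by
  simp [Nw, List.filter_append]

lemma plur_append (P Q : WProfile) (e : Cand) :
    pluralityScore (P ++ Q) e = pluralityScore P e + pluralityScore Q e := by
  simp [pluralityScore, List.filter_append]

lemma argmaxT_spec (T : LinearOrder Cand) (f : Cand → ℕ) (z : Cand) :
    f z ≤ f (argmaxT T f) := by
  have hmem : argmaxT T f ∈ (Finset.univ.filter fun e => ∀ z, f z ≤ f e) := by
    unfold argmaxT; exact @Finset.max'_mem Cand T _ _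
  exact (Finset.mem_filter.1 hmem).2 z

lemma argmaxT_eq_c (f : Cand → ℕ) (h : ∀ z, f z ≤ f Cand.c) : argmaxT Tcab f = Cand.c := by
  have h1 : Tcab.le Cand.c (argmaxT Tcab f) := by
    unfold argmaxT
    exact @Finset.le_max' Cand Tcab _ _ (Finset.mem_filter.2 ⟨Finset.mem_univ _, h⟩)
  revert h1
  cases hm : argmaxT Tcab f <;> intro h1
  · exact absurd h1 (by show ¬ (prio _ ≤ prio _); decide)
  · exact absurd h1 (by show ¬ (prio _ ≤ prio _); decide)
  · rfl

lemma argmaxT_eq_a (f : Cand → ℕ) (h : ∀ z, f z ≤ f Cand.a) (hc : f Cand.c < f Cand.a) :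
    argmaxT Tcab f = Cand.a := by
  have hspec := argmaxT_spec Tcab f Cand.a
  have h1 : Tcab.le Cand.a (argmaxT Tcab f) := by
    unfold argmaxT
    exact @Finset.le_max' Cand Tcab _ _ (Finset.mem_filter.2 ⟨Finset.mem_univ _, h⟩)
  revert h1 hspec
  cases hm : argmaxT Tcab f <;> intro hspec h1
  · rfl
  · exact absurd h1 (by show ¬ (prio _ ≤ prio _); decide)
  · omega

lemma runoff_mem (T : LinearOrder Cand) (X Y : WProfile → Cand) (P : WProfile) :
    runoffWinner T X Y P = X P ∨ runoffWinner T X Y P = Y P := by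
  simp only [runoffWinner]
  split_ifs <;> simp

lemma runoff_eq_snd (T : LinearOrder Cand) (X Y : WProfile → Cand) (P : WProfile)
    {x y : Cand} (hx : X P = x) (hy : Y P = y) (hne : x ≠ y)
    (hlt : Nw P x y < Nw P y x) : runoffWinner T X Y P = y := by
  simp only [runoffWinner, hx, hy]
  rw [if_neg hne, if_neg (by omega), if_pos hlt]

lemma runoff_eq_fst (T : LinearOrder Cand) (X Y : WProfile → Cand) (P : WProfile)
    {x y : Cand} (hx : X P = x) (hy : Y P = y) (hne : x ≠ y)
    (hlt : Nw P y x < Nw P x y) : runoffWinner T X Y P = x := by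
  simp only [runoffWinner, hx, hy]
  rw [if_neg hne, if_pos hlt]

-- base profile values
lemma nw15 (K : ℕ) :
    Nw (P15 K) a b = 6*K+1 ∧ Nw (P15 K) b a = 8*K ∧
    Nw (P15 K) a c = 7*K ∧ Nw (P15 K) c a = 7*K+1 ∧
    Nw (P15 K) b c = 10*K ∧ Nw (P15 K) c b = 4*K+1 := by
  refine ⟨?_, ?_, ?_, ?_, ?_, ?_⟩ <;> (simp [Nw, P15]; try omega)

lemma plur15 (K : ℕ) :
    pluralityScore (P15 K) a = 6*K ∧ pluralityScore (P15 K) b = 8*K ∧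
    pluralityScore (P15 K) c = 1 := by
  refine ⟨?_, ?_, ?_⟩ <;> (simp [pluralityScore, P15]; try omega)

end Aux
/-- Reduction from PARTITION to manipulating `Copeland + plurality`
(tie-breaking c ≻ a ≻ b): manipulators with weights `2k₁, …, 2k_t` (where
`k₁ + ⋯ + k_t = 2K`) can make `c` win iff the `kᵢ` can be partitioned into
two halves summing to `K`. -/
theorem copeland_plurality_partition
    (K : ℕ) (hK : 0 < K) (t : ℕ) (k : Fin t → ℕ)
    (hk : ∀ i, 0 < k i) (hsum : ∑ i, k i = 2 * K) :
    (∃ v : Fin t → List Cand, (∀ i, ValidVote (v i)) ∧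
        runoffWinner Tcab (copelandWinner Tcab) (pluralityWinner Tcab)
          (P15 K ++ List.ofFn fun i => (v i, 2 * k i)) = Cand.c) ↔
    (∃ S : Finset (Fin t), ∑ i ∈ S, k i = K) := by
  have hsum2 : ∑ i : Fin t, 2 * k i = 4 * K := by
    rw [← Finset.mul_sum, hsum]; ring
  obtain ⟨hab, hba, hac, hca, hbc, hcb⟩ := nw15 K
  obtain ⟨pa, pb, pc⟩ := plur15 K
  constructor
  · rintro ⟨v, hvv, hwin⟩
    set Q : WProfile := List.ofFn (fun i => (v i, 2 * k i)) with hQ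
    set Pf : WProfile := P15 K ++ Q with hPf
    have hNw : ∀ x y : Cand, Nw Pf x y
        = Nw (P15 K) x y + ∑ i, if (v i).idxOf x < (v i).idxOf y then 2 * k i else 0 := by
      intro x y; rw [hPf, Nw_append, hQ, nw_ofFn]
    have hPl : ∀ e : Cand, pluralityScore Pf e
        = pluralityScore (P15 K) e + ∑ i, if (v i).head? = some e then 2 * k i else 0 := by
      intro e; rw [hPf, plur_append, hQ, plur_ofFn]
    have hle : ∀ (p : Fin t → Prop) (_ : DecidablePred p),
        (∑ i, if p i then 2 * k i else 0) ≤ 4 * K := by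
      intro p hp
      calc (∑ i, if p i then 2 * k i else 0) ≤ ∑ i, 2 * k i :=
            Finset.sum_le_sum (fun i _ => by split <;> omega)
        _ = 4 * K := hsum2
    -- b always beats c pairwise
    have hcbbc : Nw Pf Cand.c Cand.b < Nw Pf Cand.b Cand.c := by
      rw [hNw, hNw, hcb, hbc]
      have := hle (fun i => (v i).idxOf Cand.c < (v i).idxOf Cand.b) inferInstance
      omega
    -- plurality winner isn't c
    have hyc : pluralityWinner Tcab Pf ≠ Cand.c := by
      intro h
      have hb := argmaxT_spec Tcab (pluralityScore Pf) Cand.b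
      rw [pluralityWinner] at h
      rw [h, hPl, hPl, pb, pc] at hb
      have := hle (fun i => (v i).head? = some Cand.c) inferInstance
      omega
    have hx : copelandWinner Tcab Pf = Cand.c := by
      rcases runoff_mem Tcab (copelandWinner Tcab) (pluralityWinner Tcab) Pf with h | h
      · rw [h] at hwin; exact hwin
      · rw [h] at hwin; exact absurd hwin hyc
    have hyb : pluralityWinner Tcab Pf ≠ Cand.b := by
      intro h
      have h2 := runoff_eq_snd Tcab (copelandWinner Tcab) (pluralityWinner Tcab) Pf hx h
        (by decide) hcbbc
      rw [h2] at hwin; exact absurd hwin (by decide)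
    have hy : pluralityWinner Tcab Pf = Cand.a := by
      cases h : pluralityWinner Tcab Pf
      · rfl
      · exact absurd h hyb
      · exact absurd h hyc
    -- plurality score comparison: F_a ≥ 2K + F_b
    have hFa : 8*K + (∑ i, if (v i).head? = some Cand.b then 2*k i else 0)
        ≤ 6*K + (∑ i, if (v i).head? = some Cand.a then 2*k i else 0) := by
      have hb := argmaxT_spec Tcab (pluralityScore Pf) Cand.b
      rw [pluralityWinner] at hy
      rw [hy, hPl, hPl, pa, pb] at hb
      exact hb
    -- Copeland: c beats a
    have hscoreb : 1 ≤ copelandScore Pf Cand.b := by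
      rw [copelandScore]
      exact Finset.card_pos.2
        ⟨Cand.c, Finset.mem_filter.2 ⟨Finset.mem_univ _, by decide, hcbbc⟩⟩
    have hcscore := argmaxT_spec Tcab (copelandScore Pf) Cand.b
    rw [copelandWinner] at hx
    rw [hx] at hcscore
    have hsub : (Finset.univ.filter fun z => z ≠ Cand.c ∧ Nw Pf z Cand.c < Nw Pf Cand.c z)
        ⊆ {Cand.a} := by
      intro z hz
      have hz' := Finset.mem_filter.1 hz
      fin_cases z
      · exact Finset.mem_singleton_self _
      · exact absurd hz'.2.2 (by omega)
      · exact absurd hz'.2.1 (by simp)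
    have hfeq : (Finset.univ.filter fun z => z ≠ Cand.c ∧ Nw Pf z Cand.c < Nw Pf Cand.c z)
        = {Cand.a} := by
      refine Finset.eq_of_subset_of_card_le hsub ?_
      rw [Finset.card_singleton]
      have h1 : 1 ≤ copelandScore Pf Cand.c := le_trans hscoreb hcscore
      rwa [copelandScore] at h1
    have hamem : Cand.a ∈ (Finset.univ.filter
        fun z => z ≠ Cand.c ∧ Nw Pf z Cand.c < Nw Pf Cand.c z) := by
      rw [hfeq]; exact Finset.mem_singleton_self _
    have hacca : Nw Pf Cand.a Cand.c < Nw Pf Cand.c Cand.a := (Finset.mem_filter.1 hamem).2.2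
    rw [hNw, hNw, hac, hca] at hacca
    -- sum relations
    have hMsum : (∑ i, if (v i).idxOf Cand.a < (v i).idxOf Cand.c then 2*k i else 0)
        + (∑ i, if (v i).idxOf Cand.c < (v i).idxOf Cand.a then 2*k i else 0) = 4*K := by
      rw [← Finset.sum_add_distrib, ← hsum2]
      refine Finset.sum_congr rfl fun i _ => ?_
      rcases valid_cases (hvv i) with h|h|h|h|h|h <;> rw [h] <;> simp
    have hFle : (∑ i, if (v i).head? = some Cand.a then 2*k i else 0)
        ≤ ∑ i, if (v i).idxOf Cand.a < (v i).idxOf Cand.c then 2*k i else 0 := by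
      refine Finset.sum_le_sum fun i _ => ?_
      rcases valid_cases (hvv i) with h|h|h|h|h|h <;> rw [h] <;> simp
    refine ⟨Finset.univ.filter fun i => (v i).head? = some Cand.a, ?_⟩
    have hFeq : (∑ i, if (v i).head? = some Cand.a then 2*k i else 0)
        = 2 * ∑ i ∈ Finset.univ.filter (fun i => (v i).head? = some Cand.a), k i := by
      rw [Finset.sum_filter, Finset.mul_sum]
      refine Finset.sum_congr rfl fun i _ => ?_
      split <;> ring
    omega
  · rintro ⟨S, hS⟩
    set v : Fin t → List Cand :=
      fun i => if i ∈ S then [Cand.a, Cand.c, Cand.b] else [Cand.c, Cand.a, Cand.b] with hv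
    refine ⟨v, fun i => ?_, ?_⟩
    · rw [hv]; dsimp only; split <;> exact ⟨by decide, by decide⟩
    set Q : WProfile := List.ofFn (fun i => (v i, 2 * k i)) with hQ
    set Pf : WProfile := P15 K ++ Q with hPf
    have hSsum : ∑ i ∈ S, 2 * k i = 2 * K := by rw [← Finset.mul_sum, hS]
    have hT : (∑ i, if i ∈ S then 2*k i else 0) = 2*K := by
      rw [Finset.sum_ite_mem, Finset.univ_inter, hSsum]
    have hF : (∑ i, if i ∈ S then (0:ℕ) else 2*k i) = 2*K := by
      have h2 : (∑ i, if i ∈ S then (0:ℕ) else 2*k i)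
          + (∑ i, if i ∈ S then 2*k i else 0) = 4*K := by
        rw [← Finset.sum_add_distrib, ← hsum2]
        exact Finset.sum_congr rfl (fun i _ => by split <;> ring)
      omega
    -- manipulators' pairwise contributions
    have e_ab : Nw Q Cand.a Cand.b = 4*K := by
      rw [hQ, nw_ofFn, ← hsum2]
      refine Finset.sum_congr rfl fun i _ => ?_
      by_cases h : i ∈ S <;> simp [hv, h]
    have e_ba : Nw Q Cand.b Cand.a = 0 := by
      rw [hQ, nw_ofFn]
      refine Finset.sum_eq_zero fun i _ => ?_
      by_cases h : i ∈ S <;> simp [hv, h]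
    have e_cb : Nw Q Cand.c Cand.b = 4*K := by
      rw [hQ, nw_ofFn, ← hsum2]
      refine Finset.sum_congr rfl fun i _ => ?_
      by_cases h : i ∈ S <;> simp [hv, h]
    have e_bc : Nw Q Cand.b Cand.c = 0 := by
      rw [hQ, nw_ofFn]
      refine Finset.sum_eq_zero fun i _ => ?_
      by_cases h : i ∈ S <;> simp [hv, h]
    have e_ac : Nw Q Cand.a Cand.c = 2*K := by
      rw [hQ, nw_ofFn, ← hT]
      refine Finset.sum_congr rfl fun i _ => ?_
      by_cases h : i ∈ S <;> simp [hv, h]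
    have e_ca : Nw Q Cand.c Cand.a = 2*K := by
      rw [hQ, nw_ofFn, ← hF]
      refine Finset.sum_congr rfl fun i _ => ?_
      by_cases h : i ∈ S <;> simp [hv, h]
    have f_a : pluralityScore Q Cand.a = 2*K := by
      rw [hQ, plur_ofFn, ← hT]
      refine Finset.sum_congr rfl fun i _ => ?_
      by_cases h : i ∈ S <;> simp [hv, h]
    have f_b : pluralityScore Q Cand.b = 0 := by
      rw [hQ, plur_ofFn]
      refine Finset.sum_eq_zero fun i _ => ?_
      by_cases h : i ∈ S <;> simp [hv, h]
    have f_c : pluralityScore Q Cand.c = 2*K := by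
      rw [hQ, plur_ofFn, ← hF]
      refine Finset.sum_congr rfl fun i _ => ?_
      by_cases h : i ∈ S <;> simp [hv, h]
    -- totals
    have NAB : Nw Pf Cand.a Cand.b = 10*K+1 := by
      rw [hPf, Nw_append, hab, e_ab]; ring
    have NBA : Nw Pf Cand.b Cand.a = 8*K := by
      rw [hPf, Nw_append, hba, e_ba]; omega
    have NAC : Nw Pf Cand.a Cand.c = 9*K := by
      rw [hPf, Nw_append, hac, e_ac]; ring
    have NCA : Nw Pf Cand.c Cand.a = 9*K+1 := by
      rw [hPf, Nw_append, hca, e_ca]; ring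
    have NBC : Nw Pf Cand.b Cand.c = 10*K := by
      rw [hPf, Nw_append, hbc, e_bc]; omega
    have NCB : Nw Pf Cand.c Cand.b = 8*K+1 := by
      rw [hPf, Nw_append, hcb, e_cb]; ring
    have PA : pluralityScore Pf Cand.a = 8*K := by
      rw [hPf, plur_append, pa, f_a]; ring
    have PB : pluralityScore Pf Cand.b = 8*K := by
      rw [hPf, plur_append, pb, f_b]; omega
    have PC : pluralityScore Pf Cand.c = 2*K+1 := by
      rw [hPf, plur_append, pc, f_c]; ring
    -- Copeland scores
    have hCA : copelandScore Pf Cand.a ≤ 1 := by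
      rw [copelandScore]
      have : (Finset.univ.filter fun z => z ≠ Cand.a ∧ Nw Pf z Cand.a < Nw Pf Cand.a z)
          ⊆ {Cand.b} := by
        intro z hz
        have hz' := Finset.mem_filter.1 hz
        fin_cases z
        · exact absurd hz'.2.1 (by simp)
        · exact Finset.mem_singleton_self _
        · exact absurd hz'.2.2 (by omega)
      simpa using Finset.card_le_card this
    have hCB : copelandScore Pf Cand.b ≤ 1 := by
      rw [copelandScore]
      have : (Finset.univ.filter fun z => z ≠ Cand.b ∧ Nw Pf z Cand.b < Nw Pf Cand.b z)
          ⊆ {Cand.c} := by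
        intro z hz
        have hz' := Finset.mem_filter.1 hz
        fin_cases z
        · exact absurd hz'.2.2 (by omega)
        · exact absurd hz'.2.1 (by simp)
        · exact Finset.mem_singleton_self _
      simpa using Finset.card_le_card this
    have hCC : 1 ≤ copelandScore Pf Cand.c := by
      rw [copelandScore]
      exact Finset.card_pos.2
        ⟨Cand.a, Finset.mem_filter.2 ⟨Finset.mem_univ _, by decide, by omega⟩⟩
    have hcw : copelandWinner Tcab Pf = Cand.c := by
      rw [copelandWinner]
      refine argmaxT_eq_c _ fun z => ?_
      fin_cases z <;> omega
    have hpw : pluralityWinner Tcab Pf = Cand.a := by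
      rw [pluralityWinner]
      refine argmaxT_eq_a _ (fun z => ?_) (by omega)
      fin_cases z <;> omega
    exact runoff_eq_fst Tcab _ _ Pf hcw hpw (by decide) (by omega)
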